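/- Under the linear herding model, for every m ∈ 𝓜 and i ≥ 1, the conditional expectation of the next historical collective opinion satisfies E[β_{i+1,m} | 𝓗_i] = β_{i,m} + w̃_{i+1}·(1 − γ_i + η_i γ_i)·(α_m − β_{i,m}) almost surely. -/

import Mathlib

open MeasureTheory Filter

/-- Cumulative weight `∑_{j=1}^i w_j`. -/
noncomputable def Sw (w : ℕ → ℝ) (i : ℕ) : ℝ := ∑ j ∈ Finset.Icc 1 i, w j

/-- Normalized weight `w̃_i = w_i / ∑_{j=1}^i w_j`. -/
noncomputable def wnorm (w : ℕ → ℝ) (i : ℕ) : ℝ := w i / Sw w i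

/-- Historical collective opinion
`β_{i,m} = (∑_{j=1}^i w_j 1{R_j = m}) / (∑_{j=1}^i w_j)`. -/
noncomputable def betaH {Ω : Type*} (w : ℕ → ℝ) (R : ℕ → Ω → ℕ) (i m : ℕ) (ω : Ω) : ℝ :=
  (∑ j ∈ Finset.Icc 1 i, w j * (if R j ω = m then (1 : ℝ) else 0)) / Sw w i

/-- `𝓗_i`: the σ-algebra generated by `R_1, …, R_i` (trivial for `i = 0`). -/
def Hsig {Ω : Type*} (R : ℕ → Ω → ℕ) (i : ℕ) : MeasurableSpace Ω :=
  ⨆ j ∈ Finset.Icc 1 i, MeasurableSpace.comap (R j) ⊤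

/-- under the linear herding model, for every `m ∈ 𝓜` and `i ≥ 1`,
`E[β_{i+1,m} | 𝓗_i] = β_{i,m} + w̃_{i+1} (1 − γ_i + η_i γ_i)(α_m − β_{i,m})` a.s. -/
theorem stmt_13
    {Ω : Type*} [MeasurableSpace Ω] (μ : Measure Ω) [IsProbabilityMeasure μ]
    (M : ℕ) (hM : 1 ≤ M)
    (α : ℕ → ℝ) (hα : ∀ m ∈ Finset.Icc 1 M, α m ∈ Set.Icc (0 : ℝ) 1)
    (hα1 : ∑ m ∈ Finset.Icc 1 M, α m = 1)
    (R : ℕ → Ω → ℕ) (hRrange : ∀ i, 1 ≤ i → ∀ ω, R i ω ∈ Finset.Icc 1 M)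
    (hRmeas : ∀ i, Measurable (R i))
    (w : ℕ → ℝ) (hw : ∀ j, 0 ≤ w j) (hw1 : 0 < w 1)
    (γ : ℕ → ℝ) (hγ : ∀ i, γ i ∈ Set.Icc (0 : ℝ) 1)
    (η : ℕ → ℝ) (hη : ∀ i, η i ∈ Set.Icc (0 : ℝ) 1)
    -- linear herding model:
    -- `P[R_{i+1} = m | 𝓗_i] = γ_i ((1 − η_i) β_{i,m} + η_i α_m) + (1 − γ_i) α_m` a.s.
    (hmodel : ∀ i : ℕ, 1 ≤ i → ∀ m ∈ Finset.Icc 1 M,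
      μ[(fun ω => if R (i + 1) ω = m then (1 : ℝ) else 0) | Hsig R i]
        =ᵐ[μ] fun ω =>
          γ i * ((1 - η i) * betaH w R i m ω + η i * α m) + (1 - γ i) * α m) :
    ∀ m ∈ Finset.Icc 1 M, ∀ i : ℕ, 1 ≤ i →
      μ[(fun ω => betaH w R (i + 1) m ω) | Hsig R i]
        =ᵐ[μ] fun ω =>
          betaH w R i m ω
            + wnorm w (i + 1) * (1 - γ i + η i * γ i) * (α m - betaH w R i m ω) := by
  intro m hm i hi
  classical
  have hSpos : ∀ k, 1 ≤ k → 0 < Sw w k := by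
    intro k hk
    have h1 : w 1 ≤ Sw w k :=
      Finset.single_le_sum (fun j _ => hw j) (Finset.mem_Icc.2 ⟨le_refl 1, hk⟩)
    linarith
  have hSi : 0 < Sw w i := hSpos i hi
  have hSi1 : 0 < Sw w (i + 1) := hSpos (i + 1) (by omega)
  have hle : Hsig R i ≤ ‹MeasurableSpace Ω› := by
    refine iSup₂_le fun j hj => ?_
    exact measurable_iff_comap_le.mp (hRmeas j)
  haveI : SigmaFinite (μ.trim hle) := by
    have : IsFiniteMeasure (μ.trim hle) := isFiniteMeasure_trim hle
    infer_instance
  have hRmeas' : ∀ j ∈ Finset.Icc 1 i, Measurable[Hsig R i] (R j) := by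
    intro j hj
    refine measurable_iff_comap_le.mpr ?_
    exact le_biSup (fun j => MeasurableSpace.comap (R j) ⊤) hj
  have hind_meas : ∀ {m0 : MeasurableSpace Ω} (j : ℕ), Measurable[m0] (R j) →
      Measurable[m0] (fun ω => if R j ω = m then (1 : ℝ) else 0) := by
    intro m0 j hj
    exact Measurable.ite (hj (measurableSet_singleton m)) measurable_const measurable_const
  have hbeta_meas : Measurable[Hsig R i] (betaH w R i m) := by
    unfold betaH
    exact (Finset.measurable_sum _ fun j hj =>
      (hind_meas j (hRmeas' j hj)).const_mul (w j)).div_const _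
  have hind_int : ∀ j, Integrable (fun ω => if R j ω = m then (1 : ℝ) else 0) μ := by
    intro j
    have heq : (fun ω => if R j ω = m then (1 : ℝ) else 0)
        = Set.indicator (R j ⁻¹' {m}) (fun _ => (1 : ℝ)) := by
      funext ω; simp [Set.indicator_apply]
    rw [heq]
    exact (integrable_const 1).indicator (hRmeas j (measurableSet_singleton m))
  have hbeta_int : ∀ k, Integrable (betaH w R k m) μ := by
    intro k
    unfold betaH
    exact (integrable_finset_sum _ fun j _ => (hind_int j).const_mul (w j)).div_const _
  have key : (fun ω => betaH w R (i + 1) m ω)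
      = (fun ω => (1 - wnorm w (i + 1)) * betaH w R i m ω)
        + (fun ω => wnorm w (i + 1) * (if R (i + 1) ω = m then (1 : ℝ) else 0)) := by
    funext ω
    have hsum : Sw w (i + 1) = Sw w i + w (i + 1) := by
      unfold Sw; rw [Finset.sum_Icc_succ_top (by omega : 1 ≤ i + 1)]
    have h1 : Sw w i ≠ 0 := ne_of_gt hSi
    have h2 : Sw w i + w (i + 1) ≠ 0 := by rw [← hsum]; exact ne_of_gt hSi1
    show betaH w R (i + 1) m ω = _ + _
    unfold betaH wnorm
    rw [Finset.sum_Icc_succ_top (by omega : 1 ≤ i + 1), hsum]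
    by_cases hc : R (i + 1) ω = m <;> simp only [hc, if_true, if_false, ite_true, ite_false] <;>
      field_simp <;> ring
  have hf_int : Integrable (fun ω => (1 - wnorm w (i + 1)) * betaH w R i m ω) μ :=
    (hbeta_int i).const_mul _
  have hg_int : Integrable
      (fun ω => wnorm w (i + 1) * (if R (i + 1) ω = m then (1 : ℝ) else 0)) μ :=
    (hind_int (i + 1)).const_mul _
  have h1 : μ[(fun ω => betaH w R (i + 1) m ω)|Hsig R i]
      =ᵐ[μ] μ[(fun ω => (1 - wnorm w (i + 1)) * betaH w R i m ω)|Hsig R i]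
        + μ[(fun ω => wnorm w (i + 1) * (if R (i + 1) ω = m then (1 : ℝ) else 0))|Hsig R i] := by
    rw [key]
    exact condExp_add hf_int hg_int (Hsig R i)
  have h2 : μ[(fun ω => (1 - wnorm w (i + 1)) * betaH w R i m ω)|Hsig R i]
      = fun ω => (1 - wnorm w (i + 1)) * betaH w R i m ω :=
    condExp_of_stronglyMeasurable hle
      ((hbeta_meas.const_mul _).stronglyMeasurable) hf_int
  have h3 : μ[(fun ω => wnorm w (i + 1) * (if R (i + 1) ω = m then (1 : ℝ) else 0))|Hsig R i]
      =ᵐ[μ] fun ω => wnorm w (i + 1)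
        * (γ i * ((1 - η i) * betaH w R i m ω + η i * α m) + (1 - γ i) * α m) := by
    have hs : (fun ω => wnorm w (i + 1) * (if R (i + 1) ω = m then (1 : ℝ) else 0))
        = wnorm w (i + 1) • (fun ω => if R (i + 1) ω = m then (1 : ℝ) else 0) := by
      funext ω; simp [smul_eq_mul]
    rw [hs]
    refine (condExp_smul (wnorm w (i + 1))
      (fun ω => if R (i + 1) ω = m then (1 : ℝ) else 0) (Hsig R i)).trans ?_
    filter_upwards [hmodel i hi m hm] with ω hω
    simp only [Pi.smul_apply, smul_eq_mul, hω]
  filter_upwards [h1, h3] with ω e1 e3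
  rw [e1, Pi.add_apply, h2, e3]
  ring
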